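/- Let c₂, c₃ > 0 and κ, ρ > 1 with κ + 1 = 2ρ, and let δ ≥ 0 satisfy (1+δ)·c₃²·ρ² ≤ 2·c₂·κ. Then for all x, y > 0: (1+δ)·c₃²·(x^ρ - y^ρ)² ≤ 2·c₂·(x - y)·(x^κ - y^κ). -/

import Mathlib

open Real Set

lemma psi_nonneg {ρ t : ℝ} (hρ : 1 < ρ) (ht : 0 < t) :
    t ^ ρ - 1 ≤ ρ * (t - 1) * t ^ (ρ - 1) := by
  have hs : -1 ≤ 1 / t - 1 := by
    have : 0 < 1 / t := by positivity
    linarith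
  have hB := one_add_mul_self_le_rpow_one_add hs hρ.le
  have h1 : (1 : ℝ) + (1 / t - 1) = 1 / t := by ring
  rw [h1] at hB
  have h3 : (1 / t) ^ ρ = (t ^ ρ)⁻¹ := by
    rw [one_div, Real.inv_rpow ht.le]
  rw [h3] at hB
  have hpos : 0 < t ^ ρ := Real.rpow_pos_of_pos ht ρ
  have hmul := mul_le_mul_of_nonneg_left hB hpos.le
  rw [mul_inv_cancel₀ hpos.ne'] at hmul
  have hts : t ^ ρ = t ^ (ρ - 1) * t := by
    rw [← Real.rpow_add_one ht.ne' (ρ - 1)]; ring_nf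
  have key : t ^ (ρ - 1) * t * (1 + ρ * (1 / t - 1))
      = t ^ (ρ - 1) * t + ρ * t ^ (ρ - 1) - ρ * (t ^ (ρ - 1) * t) := by
    field_simp; ring
  rw [hts, key] at hmul
  rw [hts]
  nlinarith [hmul]

lemma hasDeriv_h (ρ κ : ℝ) {s : ℝ} (hs : 0 < s) :
    HasDerivAt (fun u : ℝ => ρ ^ 2 * ((u - 1) * (u ^ κ - 1)) - κ * (u ^ ρ - 1) ^ 2)
      (ρ ^ 2 * ((s ^ κ - 1) + (s - 1) * (κ * s ^ (κ - 1)))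
        - κ * (2 * (s ^ ρ - 1) * (ρ * s ^ (ρ - 1)))) s := by
  have dκ : HasDerivAt (fun u : ℝ => u ^ κ) (κ * s ^ (κ - 1)) s :=
    Real.hasDerivAt_rpow_const (Or.inl hs.ne')
  have dρ : HasDerivAt (fun u : ℝ => u ^ ρ) (ρ * s ^ (ρ - 1)) s :=
    Real.hasDerivAt_rpow_const (Or.inl hs.ne')
  have d1 := (((hasDerivAt_id s).sub_const 1).mul (dκ.sub_const 1)).const_mul (ρ ^ 2)
  have d2 := ((dρ.sub_const 1).pow 2).const_mul κ
  refine HasDerivAt.congr_deriv (d1.sub d2) ?_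
  simp only [id_eq]
  push_cast
  ring

lemma hasDeriv_h1 (ρ κ : ℝ) {s : ℝ} (hs : 0 < s) :
    HasDerivAt (fun u : ℝ => ρ ^ 2 * ((u ^ κ - 1) + (u - 1) * (κ * u ^ (κ - 1)))
        - κ * (2 * (u ^ ρ - 1) * (ρ * u ^ (ρ - 1))))
      (ρ ^ 2 * (κ * s ^ (κ - 1) + (1 * (κ * s ^ (κ - 1)) + (s - 1) * (κ * ((κ - 1) * s ^ (κ - 2)))))
        - κ * ((2 * (ρ * s ^ (ρ - 1)) * (ρ * s ^ (ρ - 1)) + 2 * (s ^ ρ - 1) * (ρ * ((ρ - 1) * s ^ (ρ - 2)))))) s := by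
  have dκ : HasDerivAt (fun u : ℝ => u ^ κ) (κ * s ^ (κ - 1)) s :=
    Real.hasDerivAt_rpow_const (Or.inl hs.ne')
  have dκ1 : HasDerivAt (fun u : ℝ => u ^ (κ - 1)) ((κ - 1) * s ^ (κ - 1 - 1)) s :=
    Real.hasDerivAt_rpow_const (Or.inl hs.ne')
  have dρ : HasDerivAt (fun u : ℝ => u ^ ρ) (ρ * s ^ (ρ - 1)) s :=
    Real.hasDerivAt_rpow_const (Or.inl hs.ne')
  have dρ1 : HasDerivAt (fun u : ℝ => u ^ (ρ - 1)) ((ρ - 1) * s ^ (ρ - 1 - 1)) s :=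
    Real.hasDerivAt_rpow_const (Or.inl hs.ne')
  have d1 := ((dκ.sub_const 1).add (((hasDerivAt_id s).sub_const 1).mul
      (dκ1.const_mul κ))).const_mul (ρ ^ 2)
  have d2 := ((((dρ.sub_const 1).const_mul 2).mul (dρ1.const_mul ρ))).const_mul κ
  refine HasDerivAt.congr_deriv (d1.sub d2) ?_
  simp only [id_eq]
  ring_nf

lemma h2_nonneg {ρ κ : ℝ} (hρ : 1 < ρ) (hcrit : κ + 1 = 2 * ρ) {s : ℝ} (hs : 0 < s) :
    0 ≤ ρ ^ 2 * (κ * s ^ (κ - 1) + (1 * (κ * s ^ (κ - 1)) + (s - 1) * (κ * ((κ - 1) * s ^ (κ - 2)))))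
        - κ * ((2 * (ρ * s ^ (ρ - 1)) * (ρ * s ^ (ρ - 1)) + 2 * (s ^ ρ - 1) * (ρ * ((ρ - 1) * s ^ (ρ - 2))))) := by
  have hκ : κ = 2 * ρ - 1 := by linarith
  subst hκ
  have e1 : s ^ (2 * ρ - 1 - 1) = s ^ (ρ - 1) * s ^ (ρ - 1) := by
    rw [← Real.rpow_add hs]; congr 1; ring
  have e2 : s ^ (2 * ρ - 1 - 2) = s ^ (ρ - 1) * s ^ (ρ - 2) := by
    rw [← Real.rpow_add hs]; congr 1; ring
  rw [e1, e2]
  have hψ : 0 ≤ ρ * (s - 1) * s ^ (ρ - 1) - (s ^ ρ - 1) := by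
    have := psi_nonneg hρ hs; linarith
  have hb : (0 : ℝ) ≤ s ^ (ρ - 2) := (Real.rpow_pos_of_pos hs _).le
  have coef : (0 : ℝ) ≤ 2 * (2 * ρ - 1) * ρ * (ρ - 1) := by
    have := mul_pos (mul_pos (by linarith : (0:ℝ) < 2 * ρ - 1) (by linarith : (0:ℝ) < ρ))
      (by linarith : (0:ℝ) < ρ - 1)
    nlinarith [this]
  have final := mul_nonneg coef (mul_nonneg hb hψ)
  nlinarith [final]

lemma core {ρ κ : ℝ} (hρ : 1 < ρ) (hcrit : κ + 1 = 2 * ρ) {t : ℝ} (ht : 0 < t) :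
    κ * (t ^ ρ - 1) ^ 2 ≤ ρ ^ 2 * ((t - 1) * (t ^ κ - 1)) := by
  set h : ℝ → ℝ := fun u => ρ ^ 2 * ((u - 1) * (u ^ κ - 1)) - κ * (u ^ ρ - 1) ^ 2 with hh
  set h₁ : ℝ → ℝ := fun u => ρ ^ 2 * ((u ^ κ - 1) + (u - 1) * (κ * u ^ (κ - 1)))
      - κ * (2 * (u ^ ρ - 1) * (ρ * u ^ (ρ - 1))) with hh1
  have dh : ∀ s : ℝ, 0 < s → HasDerivAt h (h₁ s) s := fun s hs => hasDeriv_h ρ κ hs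
  have h1one : h₁ 1 = 0 := by simp [hh1]
  have hone : h 1 = 0 := by simp [hh]
  -- h₁ is monotone on Ioi 0
  have mono1 : MonotoneOn h₁ (Ioi 0) := by
    apply monotoneOn_of_deriv_nonneg (convex_Ioi 0)
    · exact fun s hs => (hasDeriv_h1 ρ κ hs).continuousAt.continuousWithinAt
    · intro s hs
      rw [interior_Ioi] at hs
      exact (hasDeriv_h1 ρ κ hs).differentiableAt.differentiableWithinAt
    · intro s hs
      rw [interior_Ioi] at hs
      rw [(hasDeriv_h1 ρ κ hs).deriv]
      exact h2_nonneg hρ hcrit hs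
  have key : 0 ≤ h t := by
    rcases le_or_gt 1 t with h1t | ht1
    · -- h monotone on Ici 1
      have mono : MonotoneOn h (Ici 1) := by
        apply monotoneOn_of_deriv_nonneg (convex_Ici 1)
        · exact fun s hs => (dh s (lt_of_lt_of_le one_pos hs)).continuousAt.continuousWithinAt
        · intro s hs
          rw [interior_Ici] at hs
          exact (dh s (lt_trans one_pos hs)).differentiableAt.differentiableWithinAt
        · intro s hs
          rw [interior_Ici] at hs
          rw [(dh s (lt_trans one_pos hs)).deriv]
          have := mono1 (mem_Ioi.mpr one_pos) (mem_Ioi.mpr (lt_trans one_pos hs)) hs.le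
          linarith [h1one ▸ this]
      have := mono (self_mem_Ici) h1t h1t
      linarith [hone ▸ this]
    · -- h antitone on Ioc 0 1
      have anti : AntitoneOn h (Ioc 0 1) := by
        apply antitoneOn_of_deriv_nonpos (convex_Ioc 0 1)
        · exact fun s hs => (dh s hs.1).continuousAt.continuousWithinAt
        · intro s hs
          rw [interior_Ioc] at hs
          exact (dh s hs.1).differentiableAt.differentiableWithinAt
        · intro s hs
          rw [interior_Ioc] at hs
          rw [(dh s hs.1).deriv]
          have := mono1 (mem_Ioi.mpr hs.1) (mem_Ioi.mpr one_pos) hs.2.le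
          linarith [h1one ▸ this]
      have := anti (mem_Ioc.mpr ⟨ht, ht1.le⟩) (mem_Ioc.mpr ⟨one_pos, le_refl 1⟩) ht1.le
      linarith [hone ▸ this]
  simp only [hh] at key
  linarith

theorem stmt14 (c₂ c₃ κ ρ δ : ℝ) (hc₂ : 0 < c₂) (hc₃ : 0 < c₃) (hκ : 1 < κ)
    (hρ : 1 < ρ) (hcrit : κ + 1 = 2 * ρ) (hδ : 0 ≤ δ)
    (hcoef : (1 + δ) * c₃ ^ 2 * ρ ^ 2 ≤ 2 * c₂ * κ) :
    ∀ x y : ℝ, 0 < x → 0 < y →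
      (1 + δ) * c₃ ^ 2 * (x ^ ρ - y ^ ρ) ^ 2
        ≤ 2 * c₂ * (x - y) * (x ^ κ - y ^ κ) := by
  intro x y hx hy
  set t := x / y with htdef
  have htpos : 0 < t := div_pos hx hy
  have hxt : x = t * y := by rw [htdef]; field_simp [hy.ne']
  have eρ : x ^ ρ = t ^ ρ * y ^ ρ := by rw [hxt, Real.mul_rpow htpos.le hy.le]
  have eκ : x ^ κ = t ^ κ * y ^ κ := by rw [hxt, Real.mul_rpow htpos.le hy.le]
  have hyy : (y ^ ρ) ^ 2 = y * y ^ κ := by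
    rw [sq, ← Real.rpow_add hy]
    nth_rewrite 2 [← Real.rpow_one y]
    rw [← Real.rpow_add hy]
    congr 1; linarith
  have core' := core hρ hcrit htpos
  -- scaled version
  have hA : (x ^ ρ - y ^ ρ) ^ 2 = (y ^ ρ) ^ 2 * (t ^ ρ - 1) ^ 2 := by rw [eρ]; ring
  have hB : (x - y) * (x ^ κ - y ^ κ) = (y * y ^ κ) * ((t - 1) * (t ^ κ - 1)) := by
    rw [eκ]; nth_rewrite 1 [hxt]; ring
  have hyκpos : (0 : ℝ) < y * y ^ κ := by positivity
  have step1 : κ * (x ^ ρ - y ^ ρ) ^ 2 ≤ ρ ^ 2 * ((x - y) * (x ^ κ - y ^ κ)) := by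
    rw [hA, hB, hyy]
    nlinarith [mul_le_mul_of_nonneg_left core' hyκpos.le]
  have hApos : (0 : ℝ) ≤ (x ^ ρ - y ^ ρ) ^ 2 := sq_nonneg _
  have hBpos : (0 : ℝ) ≤ (x - y) * (x ^ κ - y ^ κ) := by
    rcases le_total y x with hle | hle
    · refine mul_nonneg (by linarith) ?_
      have := Real.rpow_le_rpow hy.le hle (by linarith : (0:ℝ) ≤ κ)
      linarith
    · have hk := Real.rpow_le_rpow hx.le hle (by linarith : (0:ℝ) ≤ κ)
      have := mul_nonneg (by linarith : (0:ℝ) ≤ y - x) (by linarith : (0:ℝ) ≤ y ^ κ - x ^ κ)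
      nlinarith [this]
  have h1 : (1 + δ) * c₃ ^ 2 * (κ * (x ^ ρ - y ^ ρ) ^ 2)
      ≤ (1 + δ) * c₃ ^ 2 * (ρ ^ 2 * ((x - y) * (x ^ κ - y ^ κ))) :=
    mul_le_mul_of_nonneg_left step1 (by positivity)
  have h2 : ((1 + δ) * c₃ ^ 2 * ρ ^ 2) * ((x - y) * (x ^ κ - y ^ κ))
      ≤ (2 * c₂ * κ) * ((x - y) * (x ^ κ - y ^ κ)) :=
    mul_le_mul_of_nonneg_right hcoef hBpos
  have h3 : κ * ((1 + δ) * c₃ ^ 2 * (x ^ ρ - y ^ ρ) ^ 2)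
      ≤ κ * (2 * c₂ * ((x - y) * (x ^ κ - y ^ κ))) := by nlinarith [h1, h2]
  have := le_of_mul_le_mul_left h3 (lt_trans one_pos hκ)
  linarith
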